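/- Let S and T be subspaces of ℝ^d with T contained in the orthogonal complement of S, let w* ∈ ℝ^d be the ground-truth predictor (labels y(x) = ⟨w*, x⟩), let v̂ ∈ ℝ^k, and let B̂, B ∈ ℝ^{k×d}. Let x₁, …, xₙ ∈ ℝ^d be training inputs, each lying in S or in T. Assume: (i) v̂ᵀB̂x = ⟨w*, x⟩ for all x ∈ S (the pretrained model has zero loss on the source subspace); (ii) v̂ᵀB xᵢ = ⟨w*, xᵢ⟩ for all i = 1, …, n (zero empirical loss after first-layer tuning); (iii) B x = B̂ x for every x ∈ ℝ^d orthogonal to all of x₁, …, xₙ (first-layer tuning preserves directions orthogonal to the training data); and (iv) T ⊆ span{x₁, …, xₙ}. Then v̂ᵀB x = ⟨w*, x⟩ for every x ∈ S ∪ T; that is, the first-layer-tuned model attains zero squared loss on every point of the source subspace and of the orthogonal target subspace. -/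

import Mathlib

open Matrix

/-- **First-layer tuning achieves zero loss on the source subspace and on the orthogonal
target subspace.** Let `S, T` be subspaces of `ℝ^d` with `T` orthogonal to `S` (w.r.t. the
standard inner product, here the dot product), let labels be given by `y(x) = ⟨w⋆, x⟩`, and
let the training inputs `x₁,…,xₙ` each lie in `S` or in `T`. If (i) the pretrained model
`x ↦ vhᵀ Bh x` equals `⟨w⋆, ·⟩` on `S`, (ii) the tuned model `x ↦ vhᵀ B x` fits every
training point, (iii) `B` agrees with `Bh` on every vector orthogonal to all training
inputs, and (iv) `T ⊆ span{x₁,…,xₙ}`, then `vhᵀ B x = ⟨w⋆, x⟩` for every `x ∈ S ∪ T`. -/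
theorem first_layer_tuning_zero_loss_on_source_and_orthogonal
    (k d n : ℕ) (S T : Submodule ℝ (Fin d → ℝ))
    (hST : ∀ s ∈ S, ∀ t ∈ T, s ⬝ᵥ t = 0)
    (wstar : Fin d → ℝ) (vh : Fin k → ℝ)
    (Bh B : Matrix (Fin k) (Fin d) ℝ)
    (x : Fin n → Fin d → ℝ)
    (hx : ∀ i, x i ∈ S ∨ x i ∈ T)
    (hpre : ∀ z ∈ S, vh ⬝ᵥ Bh.mulVec z = wstar ⬝ᵥ z)
    (hfit : ∀ i, vh ⬝ᵥ B.mulVec (x i) = wstar ⬝ᵥ x i)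
    (horth : ∀ z : Fin d → ℝ, (∀ i, z ⬝ᵥ x i = 0) → B.mulVec z = Bh.mulVec z)
    (hspan : T ≤ Submodule.span ℝ (Set.range x)) :
    ∀ z : Fin d → ℝ, z ∈ S ∨ z ∈ T → vh ⬝ᵥ B.mulVec z = wstar ⬝ᵥ z := by
  -- The tuned model fits everything in the span of the training data.
  have span_fit : ∀ u ∈ Submodule.span ℝ (Set.range x),
      vh ⬝ᵥ B.mulVec u = wstar ⬝ᵥ u := by
    intro u hu
    induction hu using Submodule.span_induction with
    | mem u hu => obtain ⟨i, rfl⟩ := hu; exact hfit i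
    | zero => simp
    | add u v _ _ hu hv => simp [Matrix.mulVec_add, dotProduct_add, hu, hv]
    | smul a u _ hu => simp [Matrix.mulVec_smul, dotProduct_smul, hu]
  intro z hz
  rcases hz with hzS | hzT
  · -- z ∈ S: decompose along the span of the S-training points.
    have hinner : ∀ v w : EuclideanSpace ℝ (Fin d),
        inner (𝕜 := ℝ) v w = v.ofLp ⬝ᵥ w.ofLp := by
      intro v w; simp [dotProduct, PiLp.inner_apply, RCLike.inner_apply, mul_comm]
    set W : Submodule ℝ (EuclideanSpace ℝ (Fin d)) :=
      Submodule.span ℝ (WithLp.toLp 2 '' ((Set.range x) ∩ (S : Set (Fin d → ℝ))))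
    have hWS : W ≤ S.comap (WithLp.linearEquiv 2 ℝ (Fin d → ℝ)).toLinearMap := by
      rw [Submodule.span_le]; rintro _ ⟨u, hu, rfl⟩; exact hu.2
    have hWx : W ≤ (Submodule.span ℝ (Set.range x)).comap
        (WithLp.linearEquiv 2 ℝ (Fin d → ℝ)).toLinearMap := by
      rw [Submodule.span_le]; rintro _ ⟨u, hu, rfl⟩; exact Submodule.subset_span hu.1
    have htop : WithLp.toLp 2 z ∈ W ⊔ Wᗮ := by
      rw [Submodule.sup_orthogonal_of_hasOrthogonalProjection]; trivial
    obtain ⟨p, hp, q, hq, hpq⟩ := Submodule.mem_sup.mp htop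
    have hpS : p.ofLp ∈ S := hWS hp
    have hpx : p.ofLp ∈ Submodule.span ℝ (Set.range x) := hWx hp
    have hz' : z = p.ofLp + q.ofLp := by
      have h := congrArg WithLp.ofLp hpq; simpa using h.symm
    have hqS : q.ofLp ∈ S := by
      have : q.ofLp = z - p.ofLp := by
        rw [hz']; abel
      rw [this]; exact S.sub_mem hzS hpS
    have hqorth : ∀ i, q.ofLp ⬝ᵥ x i = 0 := by
      intro i
      rcases hx i with hiS | hiT
      · have hmem : WithLp.toLp 2 (x i) ∈ W :=
          Submodule.subset_span ⟨x i, ⟨Set.mem_range_self i, hiS⟩, rfl⟩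
        have := hq _ hmem
        rw [hinner] at this
        simpa [dotProduct_comm] using this
      · exact hST _ hqS (x i) hiT
    have hBq : B.mulVec q.ofLp = Bh.mulVec q.ofLp := horth _ hqorth
    rw [hz', Matrix.mulVec_add, dotProduct_add, dotProduct_add,
      span_fit p hpx]
    congr 1
    rw [hBq]
    exact hpre q hqS
  · exact span_fit z (hspan hzT)
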